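/- K_{3,n} has a prime labeling for every n ≥ 8. -/

import Mathlib

section RealPart
open Real

theorem my_real_main_inequality {x : ℝ} (x_large : (512 : ℝ) ≤ x) :
    x * (2 * x) * (2 * x) ^ √(2 * x) * 4 ^ (2 * x / 3) ≤ 4 ^ x := by
  let f : ℝ → ℝ := fun x => log x + log (2 * x) + √(2 * x) * log (2 * x) - log 4 / 3 * x
  have hf' : ∀ x, 0 < x → 0 < x * (2 * x) * (2 * x) ^ √(2 * x) / 4 ^ (x / 3) := fun x h =>
    div_pos (mul_pos (mul_pos h (by linarith)) (rpow_pos_of_pos (mul_pos two_pos h) _))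
      (rpow_pos_of_pos four_pos _)
  have hf : ∀ x, 0 < x → f x = log (x * (2 * x) * (2 * x) ^ √(2 * x) / 4 ^ (x / 3)) := by
    intro x h5
    have h6 := mul_pos (zero_lt_two' ℝ) h5
    have h7 := rpow_pos_of_pos h6 (√(2 * x))
    rw [log_div (mul_pos (mul_pos h5 h6) h7).ne' (rpow_pos_of_pos four_pos _).ne',
      log_mul (mul_pos h5 h6).ne' h7.ne', log_mul h5.ne' h6.ne',
      log_rpow h6, log_rpow zero_lt_four, ← mul_div_right_comm, ← mul_div, mul_comm x]
  have h5 : 0 < x := lt_of_lt_of_le (by norm_num1) x_large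
  rw [← div_le_one (rpow_pos_of_pos four_pos x), ← div_div_eq_mul_div, ← rpow_sub four_pos, ←
    mul_div 2 x, mul_div_left_comm, ← mul_one_sub, (by norm_num1 : (1 : ℝ) - 2 / 3 = 1 / 3),
    mul_one_div, ← log_nonpos_iff (hf' x h5).le, ← hf x h5]
  have hlog2x : ConcaveOn ℝ (Set.Ioi 0.5) (fun x : ℝ => log (2 * x)) := by
    convert (strictConcaveOn_log_Ioi.concaveOn.comp_linearMap
      ((2 : ℝ) • LinearMap.id)).subset ?_ (convex_Ioi 0.5) using 1
    · rfl
    · rfl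
    · rfl
    intro y hy
    simp only [Set.mem_Ioi, Set.mem_preimage, LinearMap.smul_apply, LinearMap.id_coe, id_eq,
      smul_eq_mul] at hy ⊢
    linarith
  have h : ConcaveOn ℝ (Set.Ioi 0.5) f := by
    apply ConcaveOn.sub
    · apply ConcaveOn.add
      · apply ConcaveOn.add
        · exact strictConcaveOn_log_Ioi.concaveOn.subset
            (Set.Ioi_subset_Ioi (by norm_num)) (convex_Ioi 0.5)
        · exact hlog2x
      convert ((strictConcaveOn_sqrt_mul_log_Ioi.concaveOn.comp_linearMap
        ((2 : ℝ) • LinearMap.id))) using 1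
      · rfl
      · rfl
      ext x
      simp only [Set.mem_Ioi, Set.mem_preimage, LinearMap.smul_apply,
        LinearMap.id_coe, id_eq, smul_eq_mul]
      rw [← mul_lt_mul_iff_right₀ (two_pos)]
      norm_num1
      rfl
      rfl
    apply ConvexOn.smul
    · refine div_nonneg (log_nonneg (by norm_num1)) (by norm_num1)
    · exact convexOn_id (convex_Ioi (0.5 : ℝ))
  suffices ∃ x1 x2, 0.5 < x1 ∧ x1 < x2 ∧ x2 ≤ x ∧ 0 ≤ f x1 ∧ f x2 ≤ 0 by
    obtain ⟨x1, x2, h1, h2, h0, h3, h4⟩ := this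
    exact (h.right_le_of_le_left'' h1 ((h1.trans h2).trans_le h0) h2 h0 (h4.trans h3)).trans h4
  refine ⟨18, 512, by norm_num1, by norm_num1, x_large, ?_, ?_⟩
  · have : √(2 * 18 : ℝ) = 6 := (sqrt_eq_iff_mul_self_eq_of_pos (by norm_num1)).mpr (by norm_num1)
    rw [hf _ (by norm_num1), log_nonneg_iff (by positivity), this, one_le_div (by norm_num1)]
    norm_num1
  · have : √(2 * 512) = 32 :=
      (sqrt_eq_iff_mul_self_eq_of_pos (by norm_num1)).mpr (by norm_num1)
    rw [hf _ (by norm_num1), log_nonpos_iff (hf' _ (by norm_num1)).le, this,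
        div_le_one (by positivity)]
    have h2 : (0:ℝ) ≤ 2 := by norm_num
    have l1 : ((2:ℝ)*512) ^ (32:ℝ) = 2 ^ ((320:ℕ):ℝ) := by
      rw [show ((2:ℝ)*512) = 2 ^ ((10:ℕ):ℝ) by rw [rpow_natCast]; norm_num,
        ← rpow_mul h2]
      norm_num
    have l2 : (512:ℝ) * (2*512) * 2 ^ ((320:ℕ):ℝ) = 2 ^ ((339:ℕ):ℝ) := by
      rw [rpow_natCast, rpow_natCast]; norm_num
      rw [show (524288:ℝ) = 2 ^ 19 by norm_num, ← pow_add]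
    have l3 : (4:ℝ) ^ ((512:ℝ)/3) = 2 ^ ((2:ℝ) * (512/3)) := by
      rw [show (4:ℝ) = 2 ^ ((2:ℕ):ℝ) by rw [rpow_natCast]; norm_num, ← rpow_mul h2]
      norm_num
    rw [l1, l2, l3]
    apply rpow_le_rpow_of_exponent_le (by norm_num)
    push_cast
    norm_num

end RealPart

section NatPart
open Nat
open Nat in
theorem my_main_inequality {n : ℕ} (n_large : 512 ≤ n) :
    n * (2 * n) * (2 * n) ^ Nat.sqrt (2 * n) * 4 ^ (2 * n / 3) ≤ 4 ^ n := by
  rw [← @Nat.cast_le ℝ]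
  simp only [Nat.cast_mul, Nat.cast_pow, Nat.cast_ofNat, ← Real.rpow_natCast]
  refine _root_.trans ?_ (my_real_main_inequality (by exact_mod_cast n_large))
  gcongr
  · have n2_pos : 0 < 2 * n := by positivity
    exact_mod_cast n2_pos
  · exact_mod_cast Real.nat_sqrt_le_real_sqrt
  · norm_num1
  · exact Nat.cast_div_le.trans (by norm_cast)


theorem my_prod_small_le (n : ℕ) (n_large : 2 < n) :
    ∏ p ∈ Finset.range (2 * n / 3 + 1), p ^ (centralBinom n).factorization p ≤
      (2 * n) ^ Nat.sqrt (2 * n) * 4 ^ (2 * n / 3) := by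
  have n_pos : 0 < n := (Nat.zero_le _).trans_lt n_large
  have n2_pos : 1 ≤ 2 * n := mul_pos (zero_lt_two' ℕ) n_pos
  let S := (Finset.range (2 * n / 3 + 1)).filter Nat.Prime
  let f x := x ^ n.centralBinom.factorization x
  have heq : ∏ x ∈ S, f x = ∏ x ∈ Finset.range (2 * n / 3 + 1), f x := by
    refine Finset.prod_filter_of_ne fun p _ h => ?_
    contrapose! h; dsimp only [f]
    rw [factorization_eq_zero_of_not_prime n.centralBinom h, _root_.pow_zero]
  rw [← heq, ← Finset.prod_filter_mul_prod_filter_not S (· ≤ Nat.sqrt (2 * n))]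
  apply mul_le_mul'
  · refine (Finset.prod_le_prod' fun p _ => (?_ : f p ≤ 2 * n)).trans ?_
    · exact pow_factorization_choose_le (mul_pos two_pos n_pos)
    have : (Finset.Icc 1 (Nat.sqrt (2 * n))).card = Nat.sqrt (2 * n) := by
      rw [Nat.card_Icc, Nat.add_sub_cancel]
    rw [Finset.prod_const]
    refine pow_right_mono₀ n2_pos ((Finset.card_le_card fun x hx => ?_).trans this.le)
    obtain ⟨h1, h2⟩ := Finset.mem_filter.1 hx
    exact Finset.mem_Icc.mpr ⟨(Finset.mem_filter.1 h1).2.one_lt.le, h2⟩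
  · refine le_trans ?_ (primorial_le_4_pow (2 * n / 3))
    refine (Finset.prod_le_prod' fun p hp => (?_ : f p ≤ p)).trans ?_
    · obtain ⟨h1, h2⟩ := Finset.mem_filter.1 hp
      refine (pow_right_mono₀ (Finset.mem_filter.1 h1).2.one_lt.le ?_).trans (pow_one p).le
      exact Nat.factorization_choose_le_one (Nat.sqrt_lt'.mp <| not_le.1 h2)
    refine Finset.prod_le_prod_of_subset_of_one_le' (Finset.filter_subset _ _) ?_
    exact fun p hp _ => (Finset.mem_filter.1 hp).2.one_lt.le

theorem my_centralBinom_le (n : ℕ) (n_large : 2 < n)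
    (no2 : ¬∃ p q : ℕ, p.Prime ∧ q.Prime ∧ p < q ∧ n < p ∧ q ≤ 2 * n) :
    centralBinom n ≤ (2 * n) ^ Nat.sqrt (2 * n) * 4 ^ (2 * n / 3) * (2 * n) := by
  have key : centralBinom n = (∏ p ∈ Finset.range (2 * n / 3 + 1),
        p ^ (centralBinom n).factorization p) *
      ∏ p ∈ Finset.Ico (2 * n / 3 + 1) (2 * n + 1), p ^ (centralBinom n).factorization p := by
    conv_lhs => rw [← Nat.prod_pow_factorization_centralBinom n]
    rw [Finset.range_eq_Ico, Finset.range_eq_Ico]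
    exact (Finset.prod_Ico_consecutive (fun p => p ^ (centralBinom n).factorization p)
      (Nat.zero_le (2 * n / 3 + 1)) (show 2 * n / 3 + 1 ≤ 2 * n + 1 by omega)).symm
  rw [key]
  refine Nat.mul_le_mul (my_prod_small_le n n_large) ?_
  -- second factor ≤ 2 * n
  set ν : ℕ → ℕ := fun p => (centralBinom n).factorization p with hν
  let T := (Finset.Ico (2 * n / 3 + 1) (2 * n + 1)).filter fun p => ν p ≠ 0
  have hT : ∏ p ∈ T, p ^ ν p = ∏ p ∈ Finset.Ico (2 * n / 3 + 1) (2 * n + 1), p ^ ν p := by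
    refine Finset.prod_filter_of_ne fun x _ h => ?_
    intro h0; exact h (by rw [h0, _root_.pow_zero])
  have hTmem : ∀ p ∈ T, p.Prime ∧ n < p ∧ p ≤ 2 * n := by
    intro p hp
    obtain ⟨hIco, hne⟩ := Finset.mem_filter.1 hp
    obtain ⟨hlo, hhi⟩ := Finset.mem_Ico.1 hIco
    have hprime : p.Prime := by
      apply Nat.prime_of_mem_primeFactors (n := centralBinom n)
      rw [← Nat.support_factorization]
      exact Finsupp.mem_support_iff.mpr hne
    refine ⟨hprime, ?_, by omega⟩
    by_contra hle
    exact hne (Nat.factorization_centralBinom_of_two_mul_self_lt_three_mul n_large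
      (by omega) (by omega))
  have hcard : ∀ a ∈ T, ∀ b ∈ T, a = b := by
    intro a ha b hb
    by_contra hab
    obtain ⟨hpa, hna, ha2⟩ := hTmem a ha
    obtain ⟨hpb, hnb, hb2⟩ := hTmem b hb
    rcases lt_or_gt_of_ne hab with h | h
    · exact no2 ⟨a, b, hpa, hpb, h, hna, hb2⟩
    · exact no2 ⟨b, a, hpb, hpa, h, hnb, ha2⟩
  rw [← hT]
  rcases T.eq_empty_or_nonempty with hE | ⟨a, ha⟩
  · rw [hE, Finset.prod_empty]; omega
  · have : T = {a} := Finset.eq_singleton_iff_unique_mem.mpr ⟨ha, fun b hb => hcard b hb a ha⟩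
    rw [this, Finset.prod_singleton]
    exact pow_factorization_choose_le (by omega)

theorem two_primes_eventually (n : ℕ) (n_large : 512 ≤ n) :
    ∃ p q : ℕ, p.Prime ∧ q.Prime ∧ p < q ∧ n < p ∧ q ≤ 2 * n := by
  by_contra no2
  have H1 : n * (2 * n) * ((2 * n) ^ Nat.sqrt (2 * n)) * 4 ^ (2 * n / 3) ≤ 4 ^ n :=
    my_main_inequality n_large
  have H2 : 4 ^ n < n * centralBinom n :=
    Nat.four_pow_lt_mul_centralBinom n (le_trans (by norm_num1) n_large)
  have H3 : centralBinom n ≤ (2 * n) ^ Nat.sqrt (2 * n) * 4 ^ (2 * n / 3) * (2 * n) :=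
    my_centralBinom_le n (by omega) no2
  have : n * centralBinom n ≤ n * ((2 * n) ^ Nat.sqrt (2 * n) * 4 ^ (2 * n / 3) * (2 * n)) :=
    Nat.mul_le_mul_left n H3
  have heq : n * ((2 * n) ^ Nat.sqrt (2 * n) * 4 ^ (2 * n / 3) * (2 * n)) =
      n * (2 * n) * ((2 * n) ^ Nat.sqrt (2 * n)) * 4 ^ (2 * n / 3) := by ring
  omega

end NatPart


theorem two_primes_step {m : ℕ} (p q : ℕ) (hp : Nat.Prime p) (hq : Nat.Prime q)
    (hpq : p < q)
    (H : m < q → ∃ p q : ℕ, Nat.Prime p ∧ Nat.Prime q ∧ p < q ∧ m < 2 * p ∧ q ≤ m)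
    (hm : m < 2 * p) :
    ∃ p q : ℕ, Nat.Prime p ∧ Nat.Prime q ∧ p < q ∧ m < 2 * p ∧ q ≤ m := by
  by_cases h : q ≤ m
  · exact ⟨p, q, hp, hq, hpq, hm, h⟩
  · exact H (not_le.1 h)

theorem two_primes (m : ℕ) (hm : 11 ≤ m) :
    ∃ p q : ℕ, Nat.Prime p ∧ Nat.Prime q ∧ p < q ∧ m < 2 * p ∧ q ≤ m := by
  rcases lt_or_ge m 1024 with hsmall | hlarge
  · refine two_primes_step 641 643 (by norm_num) (by norm_num) (by norm_num) ?_ (by omega)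
    intro h1
    refine two_primes_step 383 389 (by norm_num) (by norm_num) (by norm_num) ?_ (by omega)
    intro h2
    refine two_primes_step 227 229 (by norm_num) (by norm_num) (by norm_num) ?_ (by omega)
    intro h3
    refine two_primes_step 191 193 (by norm_num) (by norm_num) (by norm_num) ?_ (by omega)
    intro h4
    refine two_primes_step 101 103 (by norm_num) (by norm_num) (by norm_num) ?_ (by omega)
    intro h5
    refine two_primes_step 59 61 (by norm_num) (by norm_num) (by norm_num) ?_ (by omega)
    intro h6
    refine two_primes_step 37 41 (by norm_num) (by norm_num) (by norm_num) ?_ (by omega)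
    intro h7
    refine two_primes_step 29 31 (by norm_num) (by norm_num) (by norm_num) ?_ (by omega)
    intro h8
    refine two_primes_step 19 23 (by norm_num) (by norm_num) (by norm_num) ?_ (by omega)
    intro h9
    refine two_primes_step 13 17 (by norm_num) (by norm_num) (by norm_num) ?_ (by omega)
    intro h10
    refine two_primes_step 11 13 (by norm_num) (by norm_num) (by norm_num) ?_ (by omega)
    intro h11
    refine two_primes_step 7 11 (by norm_num) (by norm_num) (by norm_num) ?_ (by omega)
    intro h12
    omega
  · obtain ⟨p, q, hp, hq, hpq, hnp, hq2⟩ := two_primes_eventually (m / 2) (by omega)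
    exact ⟨p, q, hp, hq, hpq, by omega, by omega⟩

theorem stmt_15 (n : ℕ) (hn : 8 ≤ n) :
    ∃ A B : Finset ℕ, A.card = 3 ∧ B.card = n ∧ Disjoint A B ∧
      A ∪ B = Finset.Icc 1 (n + 3) ∧
      ∀ a ∈ A, ∀ b ∈ B, Nat.Coprime a b := by
  obtain ⟨p, q, hp, hq, hpq, h2p, hqm⟩ := two_primes (n + 3) (by omega)
  have h2q : n + 3 < 2 * q := by omega
  have hp1 : 1 < p := hp.one_lt
  have hq1 : 1 < q := hq.one_lt
  have hpm : p ≤ n + 3 := le_trans hpq.le hqm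
  set A : Finset ℕ := {1, p, q} with hA
  have hAsub : A ⊆ Finset.Icc 1 (n + 3) := by
    intro a ha
    simp only [hA, Finset.mem_insert, Finset.mem_singleton] at ha
    rcases ha with rfl | rfl | rfl <;> simp [Finset.mem_Icc] <;> omega
  refine ⟨A, Finset.Icc 1 (n + 3) \ A, ?_, ?_, ?_, ?_, ?_⟩
  · rw [hA]
    rw [Finset.card_insert_of_notMem (by simp; omega),
      Finset.card_insert_of_notMem (by simp; omega), Finset.card_singleton]
  · rw [Finset.card_sdiff_of_subset hAsub, Nat.card_Icc]
    have : A.card = 3 := by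
      rw [hA, Finset.card_insert_of_notMem (by simp; omega),
        Finset.card_insert_of_notMem (by simp; omega), Finset.card_singleton]
    omega
  · exact Finset.disjoint_sdiff
  · exact Finset.union_sdiff_of_subset hAsub
  · intro a ha b hb
    rw [Finset.mem_sdiff] at hb
    obtain ⟨hbI, hbA⟩ := hb
    rw [Finset.mem_Icc] at hbI
    have keyp : ∀ r : ℕ, r.Prime → r ∈ A → n + 3 < 2 * r → Nat.Coprime r b := by
      intro r hr hrA h2r
      rcases Nat.coprime_or_dvd_of_prime hr b with hc | hd
      · exact hc
      · exfalso
        obtain ⟨k, rfl⟩ := hd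
        have hk1 : k ≠ 0 := by rintro rfl; simp at hbI
        have hk2 : k < 2 := by
          by_contra hk2
          push_neg at hk2
          have : 2 * r ≤ r * k := by calc 2 * r = r * 2 := by ring
                                          _ ≤ r * k := Nat.mul_le_mul_left r hk2
          omega
        have hk : k = 1 := by omega
        subst hk
        rw [mul_one] at hbA
        exact hbA hrA
    simp only [hA, Finset.mem_insert, Finset.mem_singleton] at ha
    rcases ha with ha | ha | ha
    · rw [ha]; exact Nat.coprime_one_left b
    · rw [ha]; exact keyp p hp (by simp [hA]) h2p
    · rw [ha]; exact keyp q hq (by simp [hA]) h2q
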